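/- Let A and B be admissible linear chains with e(B) = 1 − e(Aᵀ). Then e(Bᵀ) = 1 − e(A). (That is, the adjoint operation commutes with reversal: (A*)ᵀ = (Aᵀ)*.) -/

import Mathlib

/-- The tridiagonal matrix associated to a linear chain `A = [a₁,…,a_r]`:
diagonal entries `aᵢ`, entries `-1` immediately above/below the diagonal, `0` elsewhere. -/
def chainMatrix (A : List ℤ) : Matrix (Fin A.length) (Fin A.length) ℤ :=
  fun i j =>
    if i = j then A.get i
    else if (i : ℕ) + 1 = (j : ℕ) ∨ (j : ℕ) + 1 = (i : ℕ) then -1 else 0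

/-- The discriminant `d(A)` of a linear chain: the determinant of `chainMatrix A`
(the `0 × 0` determinant being `1` for the empty list). -/
def disc (A : List ℤ) : ℤ := (chainMatrix A).det

/-- A linear chain is admissible if it is nonempty and all of its entries are `≥ 2`. -/
def Admissible (A : List ℤ) : Prop := A ≠ [] ∧ ∀ a ∈ A, 2 ≤ a

/-- The inductance `e(A) = d(A̅)/d(A)` of a linear chain, as a rational number. -/
def inductance (A : List ℤ) : ℚ := (disc A.tail : ℚ) / (disc A : ℚ)

lemma disc_nil : disc [] = 1 := by
  simp [disc, Matrix.det_fin_zero]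

lemma disc_singleton (a : ℤ) : disc [a] = a := by
  simp [disc, chainMatrix, Matrix.det_fin_one]

lemma submatrix_cons (a : ℤ) (L : List ℤ) :
    (chainMatrix (a :: L)).submatrix Fin.succ Fin.succ = chainMatrix L := by
  ext i j
  simp only [Matrix.submatrix_apply, chainMatrix]
  by_cases h : i = j
  · subst h
    simp [List.get]
  · have h' : i.succ ≠ j.succ := fun hc => h (Fin.succ_injective _ hc)
    rw [if_neg h, if_neg h']
    have : ((i.succ : ℕ) + 1 = (j.succ : ℕ) ∨ (j.succ : ℕ) + 1 = (i.succ : ℕ)) ↔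
      ((i : ℕ) + 1 = (j : ℕ) ∨ (j : ℕ) + 1 = (i : ℕ)) := by
      simp [Fin.val_succ]
    rw [if_congr this rfl rfl]

lemma disc_cons_cons (a b : ℤ) (L : List ℤ) :
    disc (a :: b :: L) = a * disc (b :: L) - disc L := by
  have hM : disc (a :: b :: L) = (chainMatrix (a :: b :: L)).det := rfl
  rw [hM, Matrix.det_succ_row_zero]
  simp only [List.length_cons]
  rw [Fin.sum_univ_succ, Fin.sum_univ_succ]
  set M : Matrix (Fin (L.length + 1 + 1)) (Fin (L.length + 1 + 1)) ℤ :=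
    chainMatrix (a :: b :: L) with hMdef
  have h00 : M 0 0 = a := by simp [hMdef, chainMatrix, List.get]
  have h01 : M 0 (Fin.succ 0) = -1 := by
    simp [hMdef, chainMatrix, Fin.ext_iff]
  have h0j : ∀ j : Fin L.length, M 0 j.succ.succ = 0 := by
    intro j
    have h1 : (0 : Fin (L.length + 1 + 1)) ≠ j.succ.succ := by
      intro h; exact absurd (congrArg Fin.val h) (by simp)
    have h2 : ¬ (((0 : Fin (L.length+1+1)) : ℕ) + 1 = ((j.succ.succ : Fin (L.length+1+1)) : ℕ)
        ∨ ((j.succ.succ : Fin (L.length+1+1)) : ℕ) + 1 = ((0 : Fin (L.length+1+1)) : ℕ)) := by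
      simp [Fin.val_succ]
    exact (if_neg h1).trans (if_neg h2)
  have hzero : (∑ j : Fin L.length, (-1) ^ ((j.succ.succ : Fin (L.length+1+1)) : ℕ)
      * M 0 j.succ.succ * (M.submatrix Fin.succ j.succ.succ.succAbove).det) = 0 := by
    apply Finset.sum_eq_zero
    intro j _
    rw [h0j j]
    ring
  rw [hzero, h00, h01]
  have hsub0 : M.submatrix Fin.succ (Fin.succAbove 0) = chainMatrix (b :: L) := by
    rw [Fin.succAbove_zero]
    exact submatrix_cons a (b :: L)
  rw [hsub0]
  -- term 1
  set N : Matrix (Fin (L.length + 1)) (Fin (L.length + 1)) ℤ :=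
    M.submatrix Fin.succ (Fin.succ 0).succAbove with hNdef
  have hN : N.det = - disc L := by
    rw [Matrix.det_succ_column_zero, Fin.sum_univ_succ]
    have hN00 : N 0 0 = -1 := by
      have : (Fin.succ (0 : Fin (L.length+1))).succAbove 0 = 0 := Fin.succ_succAbove_zero 0
      simp only [hNdef, Matrix.submatrix_apply, this]
      simp [hMdef, chainMatrix, Fin.ext_iff]
    have hNi0 : ∀ i : Fin L.length, N i.succ 0 = 0 := by
      intro i
      have : (Fin.succ (0 : Fin (L.length+1))).succAbove 0 = 0 := Fin.succ_succAbove_zero 0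
      simp only [hNdef, Matrix.submatrix_apply, this]
      have h1 : (i.succ.succ : Fin (L.length+1+1)) ≠ 0 := by
        intro h; exact absurd (congrArg Fin.val h) (by simp)
      have h2 : ¬ (((i.succ.succ : Fin (L.length+1+1)) : ℕ) + 1 = ((0 : Fin (L.length+1+1)) : ℕ)
          ∨ ((0 : Fin (L.length+1+1)) : ℕ) + 1 = ((i.succ.succ : Fin (L.length+1+1)) : ℕ)) := by
        simp [Fin.val_succ]
      exact (if_neg h1).trans (if_neg h2)
    have hrest : (∑ i : Fin L.length, (-1) ^ ((i.succ : Fin (L.length+1)) : ℕ)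
        * N i.succ 0 * (N.submatrix i.succ.succAbove Fin.succ).det) = 0 := by
      apply Finset.sum_eq_zero
      intro i _
      rw [hNi0 i]
      ring
    rw [hrest, hN00]
    have hsub : N.submatrix (Fin.succAbove 0) Fin.succ = chainMatrix L := by
      rw [Fin.succAbove_zero]
      have : N.submatrix Fin.succ Fin.succ
          = ((chainMatrix (a :: b :: L)).submatrix Fin.succ Fin.succ).submatrix
              Fin.succ Fin.succ := by
        ext i j
        simp only [hNdef, hMdef, Matrix.submatrix_apply, Fin.succ_succAbove_succ,
          Fin.succAbove_zero]
      rw [this, submatrix_cons a (b :: L), submatrix_cons b L]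
    rw [hsub]
    simp [disc]
  rw [hN]
  simp [disc]
  ring

lemma disc_reverse (A : List ℤ) : disc A.reverse = disc A := by
  have hlen : A.reverse.length = A.length := List.length_reverse
  let e : Fin A.reverse.length ≃ Fin A.length := (finCongr hlen).trans Fin.revPerm
  have he : ∀ i : Fin A.reverse.length, ((e i : Fin A.length) : ℕ) = A.length - 1 - (i : ℕ) := by
    intro i
    simp [e, Fin.rev, finCongr]
    omega
  have hmat : chainMatrix A.reverse = (chainMatrix A).submatrix e e := by
    ext i j
    simp only [Matrix.submatrix_apply, chainMatrix]
    by_cases h : i = j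
    · subst h
      rw [if_pos rfl, if_pos rfl]
      rw [List.get_reverse' A i (by omega)]
      congr 1
      exact Fin.ext (by rw [he i])
    · have h' : e i ≠ e j := fun hc => h (e.injective hc)
      rw [if_neg h, if_neg h']
      have hi := i.isLt
      have hj := j.isLt
      have : ((i : ℕ) + 1 = (j : ℕ) ∨ (j : ℕ) + 1 = (i : ℕ)) ↔
          (((e i : Fin A.length) : ℕ) + 1 = ((e j : Fin A.length) : ℕ)
            ∨ ((e j : Fin A.length) : ℕ) + 1 = ((e i : Fin A.length) : ℕ)) := by
        rw [he i, he j]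
        omega
      rw [if_congr this rfl rfl]
  rw [disc, hmat, Matrix.det_submatrix_equiv_self]
  rfl

lemma disc_cons (a : ℤ) (L : List ℤ) (hL : L ≠ []) :
    disc (a :: L) = a * disc L - disc L.tail := by
  cases L with
  | nil => exact absurd rfl hL
  | cons b L' => exact disc_cons_cons a b L'

lemma disc_tail_lt : ∀ A : List ℤ, (∀ a ∈ A, 2 ≤ a) → A ≠ [] →
    0 < disc A.tail ∧ disc A.tail < disc A := by
  intro A
  induction A with
  | nil => intro _ h; exact absurd rfl h
  | cons a L ih =>
    intro h _
    have ha : 2 ≤ a := h a List.mem_cons_self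
    cases L with
    | nil =>
      simp only [List.tail_cons, disc_nil, disc_singleton]
      omega
    | cons b L' =>
      have hL : (∀ x ∈ b :: L', 2 ≤ x) := fun x hx => h x (List.mem_cons_of_mem a hx)
      obtain ⟨h1, h2⟩ := ih hL (by simp)
      simp only [List.tail_cons] at h1 h2 ⊢
      rw [disc_cons_cons]
      constructor
      · linarith
      · nlinarith

lemma disc_pos (A : List ℤ) (h : ∀ a ∈ A, 2 ≤ a) : 0 < disc A := by
  cases A with
  | nil => simp [disc_nil]
  | cons a L =>
    obtain ⟨h1, h2⟩ := disc_tail_lt (a :: L) h (by simp)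
    linarith

lemma disc_identity : ∀ A : List ℤ, 2 ≤ A.length →
    disc A.tail * disc A.dropLast - disc A * disc A.tail.dropLast = 1 := by
  intro A
  induction A with
  | nil => intro h; simp at h
  | cons a L ih =>
    intro h
    cases L with
    | nil => simp at h
    | cons b L' =>
      cases L' with
      | nil =>
        simp only [List.tail_cons, List.dropLast_cons₂, List.dropLast_singleton,
          List.dropLast_nil, disc_nil, disc_singleton]
        rw [disc_cons_cons]
        simp only [disc_nil, disc_singleton]
        ring
      | cons c L'' =>
        have ih' := ih (by simp)
        simp only [List.tail_cons] at ih' ⊢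
        rw [List.dropLast_cons₂]
        rw [disc_cons (a := a) (L := b :: c :: L'') (by simp)]
        rw [disc_cons (a := a) (L := (b :: c :: L'').dropLast) (by simp)]
        simp only [List.tail_cons] at *
        have hcomm : ((b :: c :: L'').dropLast).tail = (c :: L'').dropLast := by
          simp
        rw [hcomm]
        nlinarith [ih']

lemma disc_identity' (A : List ℤ) (h : A ≠ []) :
    ∃ s : ℤ, disc A.tail * disc A.dropLast - disc A * s = 1 := by
  cases A with
  | nil => exact absurd rfl h
  | cons a L =>
    cases L with
    | nil =>
      exact ⟨0, by simp [disc_nil]⟩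
    | cons b L' =>
      exact ⟨disc (a :: b :: L').tail.dropLast, disc_identity (a :: b :: L') (by simp)⟩

/-- Lemma 2.2 (ii), `(A*)ᵀ = (Aᵀ)*`: if `B = A*` (i.e. `e(B) = 1 − e(Aᵀ)`),
then `Bᵀ = (Aᵀ)*` (i.e. `e(Bᵀ) = 1 − e(A)`). -/
theorem adjoint_reverse (A B : List ℤ) (hA : Admissible A) (hB : Admissible B)
    (hAB : inductance B = 1 - inductance A.reverse) :
    inductance B.reverse = 1 - inductance A := by
  obtain ⟨hAne, hA2⟩ := hA
  obtain ⟨hBne, hB2⟩ := hB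
  set p := disc A with hp
  set q := disc A.tail with hq
  set q' := disc A.dropLast with hq'
  set pB := disc B with hpB
  set qB := disc B.tail with hqB
  set qB' := disc B.dropLast with hqB'
  -- reverse facts
  have hA2r : ∀ a ∈ A.reverse, 2 ≤ a := fun a ha => hA2 a (List.mem_reverse.mp ha)
  have hB2r : ∀ a ∈ B.reverse, 2 ≤ a := fun a ha => hB2 a (List.mem_reverse.mp ha)
  have hAner : A.reverse ≠ [] := by simpa using hAne
  have hBner : B.reverse ≠ [] := by simpa using hBne
  have hrevA : disc A.reverse = p := disc_reverse A
  have hrevAt : disc A.reverse.tail = q' := by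
    rw [List.tail_reverse, disc_reverse]
  have hrevB : disc B.reverse = pB := disc_reverse B
  have hrevBt : disc B.reverse.tail = qB' := by
    rw [List.tail_reverse, disc_reverse]
  -- bounds
  obtain ⟨hq0, hqp⟩ := disc_tail_lt A hA2 hAne
  obtain ⟨hq'0, hq'p⟩ := by
    have := disc_tail_lt A.reverse hA2r hAner
    rwa [hrevAt, hrevA] at this
  obtain ⟨hqB0, hqBp⟩ := disc_tail_lt B hB2 hBne
  obtain ⟨hqB'0, hqB'p⟩ := by
    have := disc_tail_lt B.reverse hB2r hBner
    rwa [hrevBt, hrevB] at this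
  have hp0 : 0 < p := disc_pos A hA2
  have hpB0 : 0 < pB := disc_pos B hB2
  -- identities
  obtain ⟨sA, hsA⟩ := disc_identity' A hAne
  obtain ⟨sB, hsB⟩ := disc_identity' B hBne
  rw [← hp, ← hq, ← hq'] at hsA
  rw [← hpB, ← hqB, ← hqB'] at hsB
  -- hypothesis as integer equation
  have hZ : qB * p = (p - q') * pB := by
    have h1 : (qB : ℚ) / (pB : ℚ) = ((p : ℚ) - q') / p := by
      rw [show ((p : ℚ) - q') / p = 1 - (q' : ℚ)/(p : ℚ) by
        field_simp]
      rw [← hrevAt, ← hrevA]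
      exact hAB
    rw [div_eq_div_iff (by exact_mod_cast hpB0.ne') (by exact_mod_cast hp0.ne')] at h1
    exact_mod_cast h1
  -- coprimalities
  have hco1 : IsCoprime pB qB := ⟨-sB, qB', by ring_nf; linarith⟩
  have hco2 : IsCoprime p (p - q') := ⟨q - sA, -q, by ring_nf; linarith⟩
  -- pB = p
  have hd1 : pB ∣ p := by
    apply hco1.dvd_of_dvd_mul_left
    exact ⟨p - q', by linarith [hZ]⟩
  have hd2 : p ∣ pB := by
    apply hco2.dvd_of_dvd_mul_left
    exact ⟨qB, by linarith [hZ]⟩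
  have hpp : pB = p := Int.dvd_antisymm hpB0.le hp0.le hd1 hd2
  have hqBval : qB = p - q' := by
    have := hZ
    rw [hpp] at this
    exact mul_right_cancel₀ hp0.ne' this
  -- qB' = p - q
  have hcoq' : IsCoprime p q' := ⟨-sA, q, by ring_nf; linarith⟩
  have hdvd : p ∣ qB' + q := by
    apply hcoq'.dvd_of_dvd_mul_left
    rw [hpp, hqBval] at hsB
    exact ⟨qB' - sB + sA, by linear_combination hsA - hsB⟩
  have hqB'val : qB' = p - q := by
    obtain ⟨k, hk⟩ := hdvd
    have hk1 : k = 1 := by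
      have hb1 : 0 < p * k := by rw [← hk]; linarith
      have hb2 : p * k < 2 * p := by rw [← hk]; linarith [hqB'p, hpp]
      nlinarith
    rw [hk1, mul_one] at hk
    linarith
  -- conclude
  unfold inductance
  rw [hrevBt, hrevB, hpp, hqB'val, ← hp, ← hq]
  have hpQ : (p : ℚ) ≠ 0 := by exact_mod_cast hp0.ne'
  field_simp
  exact Int.cast_sub p q
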